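/- arXiv:2106.07646 — 4 statements merged into one kernel-verified Lean document; each statement's English description precedes it below -/
import Mathlib

section
/- Let A be an assembly with a Guilbaud voting system 𝓔 and a profile assignment π : A → ZMod 6, and let ≻ be the resulting collective preference relation on the three candidates. Then ≻ is a strict linear order (irreflexive, transitive, and total on distinct candidates) if and only if condition (C) holds: there exists p ∈ ZMod 6 such that both coalitions {v | π v ∈ {p, p+1, p+2}} and {v | π v ∈ {p+1, p+2, p+3}} are efficient. -/
/-- The rank (position, 0 = first) of candidate `x` in the ranking labeled `p`.
Profile 1 is a>b>c, 2 is a>c>b, 3 is c>a>b, 4 is c>b>a, 5 is b>c>a, 0 is b>a>c,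
with candidates a = 0, b = 1, c = 2 in `Fin 3`. -/
def rank (p : ZMod 6) : Fin 3 → Fin 3 :=
  match p.val with
  | 0 => ![1, 0, 2]  -- b>a>c
  | 1 => ![0, 1, 2]  -- a>b>c
  | 2 => ![0, 2, 1]  -- a>c>b
  | 3 => ![1, 2, 0]  -- c>a>b
  | 4 => ![2, 1, 0]  -- c>b>a
  | _ => ![2, 0, 1]  -- b>c>a

/-- The strict linear order on candidates given by profile `p`: `x` is ranked above `y`. -/
def pref (p : ZMod 6) (x y : Fin 3) : Prop := rank p x < rank p y

/-- The collective preference: `x ≻ y` iff the coalition of voters preferring `x` to `y`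
is efficient. -/
def collPref {A : Type*} (𝓔 : Set (Set A)) (π : A → ZMod 6) (x y : Fin 3) : Prop :=
  {v : A | pref (π v) x y} ∈ 𝓔

/- auxiliary -/
instance (p : ZMod 6) (x y : Fin 3) : Decidable (pref p x y) :=
  inferInstanceAs (Decidable (rank p x < rank p y))

def Mf : Fin 3 → Fin 3 → ZMod 6 := ![![0, 1, 0], ![4, 0, 5], ![3, 2, 0]]

theorem condorcet_linear_iff_conditionC {A : Type*} (𝓔 : Set (Set A))
    (hC1 : ∀ K : Set A, K ∈ 𝓔 ↔ Kᶜ ∉ 𝓔)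
    (hC2 : ∀ K L : Set A, K ∈ 𝓔 → K ⊆ L → L ∈ 𝓔)
    (π : A → ZMod 6) :
    (Irreflexive (collPref 𝓔 π) ∧ Transitive (collPref 𝓔 π) ∧
      ∀ x y : Fin 3, x ≠ y → collPref 𝓔 π x y ∨ collPref 𝓔 π y x) ↔
    (∃ p : ZMod 6,
      {v : A | π v ∈ ({p, p + 1, p + 2} : Set (ZMod 6))} ∈ 𝓔 ∧
      {v : A | π v ∈ ({p + 1, p + 2, p + 3} : Set (ZMod 6))} ∈ 𝓔) := by
  classical
  -- abbreviation
  let e : ZMod 6 → Prop := fun p => {v : A | π v ∈ ({p, p + 1, p + 2} : Set (ZMod 6))} ∈ 𝓔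
  -- empty coalition is not efficient
  have hempty : (∅ : Set A) ∉ 𝓔 := by
    intro h
    have h2 : (Set.univ : Set A) ∈ 𝓔 := hC2 ∅ Set.univ h (Set.subset_univ _)
    have := (hC1 ∅).1 h
    rw [Set.compl_empty] at this
    exact this h2
  -- complement swaps e p and e (p+3)
  have hxor : ∀ p : ZMod 6, e (p + 3) ↔ ¬ e p := by
    intro p
    have hset : {v : A | π v ∈ ({p + 3, p + 3 + 1, p + 3 + 2} : Set (ZMod 6))}
        = {v : A | π v ∈ ({p, p + 1, p + 2} : Set (ZMod 6))}ᶜ := by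
      ext v
      simp only [Set.mem_setOf_eq, Set.mem_compl_iff, Set.mem_insert_iff,
        Set.mem_singleton_iff]
      exact (by decide : ∀ p q : ZMod 6,
        (q = p + 3 ∨ q = p + 3 + 1 ∨ q = p + 3 + 2) ↔ ¬(q = p ∨ q = p + 1 ∨ q = p + 2))
        p (π v)
    show _ ∈ 𝓔 ↔ ¬ (_ ∈ 𝓔)
    rw [hset]
    have h1 := hC1 {v : A | π v ∈ ({p, p + 1, p + 2} : Set (ZMod 6))}
    have h2 := hC1 {v : A | π v ∈ ({p, p + 1, p + 2} : Set (ZMod 6))}ᶜ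
    rw [compl_compl] at h2
    tauto
  have hxor' : ∀ p q : ZMod 6, q = p + 3 → (e q ↔ ¬ e p) := by
    intro p q h; rw [h]; exact hxor p
  -- collective preference in terms of e
  have hcoll : ∀ x y : Fin 3, x ≠ y → (collPref 𝓔 π x y ↔ e (Mf x y)) := by
    intro x y hxy
    show _ ∈ 𝓔 ↔ _ ∈ 𝓔
    have hset : {v : A | pref (π v) x y}
        = {v : A | π v ∈ ({Mf x y, Mf x y + 1, Mf x y + 2} : Set (ZMod 6))} := by
      ext v
      simp only [Set.mem_setOf_eq, Set.mem_insert_iff, Set.mem_singleton_iff]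
      exact (by decide : ∀ (q : ZMod 6) (x y : Fin 3), x ≠ y →
        (pref q x y ↔ (q = Mf x y ∨ q = Mf x y + 1 ∨ q = Mf x y + 2))) (π v) x y hxy
    rw [hset]
  have hdiag : ∀ x : Fin 3, ¬ collPref 𝓔 π x x := by
    intro x h
    have hset : {v : A | pref (π v) x x} = (∅ : Set A) := by
      ext v
      simp only [Set.mem_setOf_eq, Set.mem_empty_iff_false, iff_false]
      exact (by decide : ∀ (q : ZMod 6) (x : Fin 3), ¬ pref q x x) (π v) x
    exact hempty (hset ▸ h)
  -- the RHS rephrased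
  have hRHS : (∃ p : ZMod 6,
      {v : A | π v ∈ ({p, p + 1, p + 2} : Set (ZMod 6))} ∈ 𝓔 ∧
      {v : A | π v ∈ ({p + 1, p + 2, p + 3} : Set (ZMod 6))} ∈ 𝓔)
      ↔ (∃ p : ZMod 6, e p ∧ e (p + 1)) := by
    have hset : ∀ p : ZMod 6, {v : A | π v ∈ ({p + 1, p + 2, p + 3} : Set (ZMod 6))}
        = {v : A | π v ∈ ({p + 1, p + 1 + 1, p + 1 + 2} : Set (ZMod 6))} := by
      intro p
      ext v
      simp only [Set.mem_setOf_eq, Set.mem_insert_iff, Set.mem_singleton_iff]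
      exact (by decide : ∀ p q : ZMod 6,
        (q = p + 1 ∨ q = p + 2 ∨ q = p + 3) ↔ (q = p + 1 ∨ q = p + 1 + 1 ∨ q = p + 1 + 2))
        p (π v)
    constructor
    · rintro ⟨p, h1, h2⟩
      refine ⟨p, h1, ?_⟩
      show {v : A | π v ∈ ({p + 1, p + 1 + 1, p + 1 + 2} : Set (ZMod 6))} ∈ 𝓔
      rw [← hset p]; exact h2
    · rintro ⟨p, h1, h2⟩
      refine ⟨p, h1, ?_⟩
      rw [hset p]; exact h2
  rw [hRHS]
  constructor
  · -- forward: linearity implies condition (C)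
    rintro ⟨_, htrans, _⟩
    -- reduce cycles to transitivity violations
    have hcyc1 : ¬ (e 0 ∧ e 2 ∧ e 4) := by
      rintro ⟨h0, h2, h4⟩
      -- cycle a>c (e0), c>b (e2), hence a>b (e1); but e4 contradicts e1
      have cac : collPref 𝓔 π 0 2 := (hcoll 0 2 (by decide)).2 (by
        rw [show Mf 0 2 = (0 : ZMod 6) from by decide]; exact h0)
      have ccb : collPref 𝓔 π 2 1 := (hcoll 2 1 (by decide)).2 (by
        rw [show Mf 2 1 = (2 : ZMod 6) from by decide]; exact h2)
      have cab := htrans cac ccb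
      have h1 : e 1 := by
        have := (hcoll 0 1 (by decide)).1 cab
        rwa [show Mf 0 1 = (1 : ZMod 6) from by decide] at this
      exact (hxor' 1 4 (by decide)).1 h4 h1
    have hcyc2 : ¬ (e 1 ∧ e 3 ∧ e 5) := by
      rintro ⟨h1, h3, h5⟩
      -- cycle a>b (e1), b>c (e5), hence a>c (e0); but e3 contradicts e0
      have cab : collPref 𝓔 π 0 1 := (hcoll 0 1 (by decide)).2 (by
        rw [show Mf 0 1 = (1 : ZMod 6) from by decide]; exact h1)
      have cbc : collPref 𝓔 π 1 2 := (hcoll 1 2 (by decide)).2 (by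
        rw [show Mf 1 2 = (5 : ZMod 6) from by decide]; exact h5)
      have cac := htrans cab cbc
      have h0 : e 0 := by
        have := (hcoll 0 2 (by decide)).1 cac
        rwa [show Mf 0 2 = (0 : ZMod 6) from by decide] at this
      exact (hxor' 0 3 (by decide)).1 h3 h0
    by_cases h0 : e 0
    · by_cases h1 : e 1
      · exact ⟨0, h0, by rw [show (0 : ZMod 6) + 1 = 1 from by decide]; exact h1⟩
      · have h4 : e 4 := (hxor' 1 4 (by decide)).2 h1
        by_cases h5 : e 5
        · exact ⟨4, h4, by rw [show (4 : ZMod 6) + 1 = 5 from by decide]; exact h5⟩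
        · have h2 : e 2 := (hxor' 5 2 (by decide)).2 h5
          exact absurd ⟨h0, h2, h4⟩ hcyc1
    · have h3 : e 3 := (hxor' 0 3 (by decide)).2 h0
      by_cases h4 : e 4
      · exact ⟨3, h3, by rw [show (3 : ZMod 6) + 1 = 4 from by decide]; exact h4⟩
      · have h1 : e 1 := (hxor' 4 1 (by decide)).2 h4
        by_cases h2 : e 2
        · exact ⟨1, h1, by rw [show (1 : ZMod 6) + 1 = 2 from by decide]; exact h2⟩
        · have h5 : e 5 := (hxor' 2 5 (by decide)).2 h2
          exact absurd ⟨h1, h3, h5⟩ hcyc2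
  · -- backward: condition (C) implies linearity
    intro hadj
    -- key transitivity lemma at the level of e
    have hkey : ∀ q : ZMod 6, e q → e (q + 2) → e (q + 1) := by
      intro q hq hq2
      by_contra h1
      have h4 : e (q + 4) := (hxor' (q + 1) (q + 4) (by ring)).2 h1
      have h3 : ¬ e (q + 3) := fun h => (hxor q).1 h hq
      have h5 : ¬ e (q + 5) := fun h => (hxor' (q + 2) (q + 5) (by ring)).1 h hq2
      obtain ⟨p, hp, hp1⟩ := hadj
      have hcase : p = q ∨ p = q + 1 ∨ p = q + 2 ∨ p = q + 3 ∨ p = q + 4 ∨ p = q + 5 := by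
        have hr := (by decide : ∀ r : ZMod 6,
          r = 0 ∨ r = 1 ∨ r = 2 ∨ r = 3 ∨ r = 4 ∨ r = 5) (p - q)
        have hpq : p = q + (p - q) := by ring
        rcases hr with h | h | h | h | h | h <;> rw [h] at hpq
        · exact Or.inl (by rw [hpq, add_zero])
        all_goals tauto
      rcases hcase with h | h | h | h | h | h <;> rw [h] at hp hp1
      · exact h1 hp1
      · exact h1 hp
      · exact h3 (by rw [show q + 3 = q + 2 + 1 from by ring]; exact hp1)
      · exact h3 hp
      · exact h5 (by rw [show q + 5 = q + 4 + 1 from by ring]; exact hp1)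
      · exact h5 hp
    refine ⟨hdiag, ?_, ?_⟩
    · -- transitivity
      intro x y z hxy hyz
      by_cases hxyeq : x = y
      · rwa [hxyeq]
      by_cases hyzeq : y = z
      · rwa [← hyzeq]
      by_cases hxzeq : x = z
      · exfalso
        rw [hxzeq] at hxy
        have h1 : e (Mf z y) := (hcoll z y (fun h => hyzeq h.symm)).1 hxy
        have h2 : e (Mf y z) := (hcoll y z hyzeq).1 hyz
        have hM : Mf y z = Mf z y + 3 :=
          (by decide : ∀ x y : Fin 3, x ≠ y → Mf y x = Mf x y + 3) z y
            (fun h => hyzeq h.symm)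
        exact (hxor' (Mf z y) (Mf y z) hM).1 h2 h1
      have e1 : e (Mf x y) := (hcoll x y hxyeq).1 hxy
      have e2 : e (Mf y z) := (hcoll y z hyzeq).1 hyz
      have hshape := (by decide : ∀ x y z : Fin 3, x ≠ y → y ≠ z → x ≠ z →
          (Mf y z = Mf x y + 2 ∧ Mf x z = Mf x y + 1) ∨
          (Mf x y = Mf y z + 2 ∧ Mf x z = Mf y z + 1)) x y z hxyeq hyzeq hxzeq
      refine (hcoll x z hxzeq).2 ?_
      rcases hshape with ⟨ha, hb⟩ | ⟨ha, hb⟩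
      · rw [hb]; exact hkey (Mf x y) e1 (by rw [← ha]; exact e2)
      · rw [hb]; exact hkey (Mf y z) e2 (by rw [← ha]; exact e1)
    · -- totality
      intro x y hxy
      by_cases h : collPref 𝓔 π x y
      · exact Or.inl h
      · right
        have hset : {v : A | pref (π v) y x} = {v : A | pref (π v) x y}ᶜ := by
          ext v
          simp only [Set.mem_setOf_eq, Set.mem_compl_iff]
          exact (by decide : ∀ (q : ZMod 6) (x y : Fin 3), x ≠ y →
            (pref q y x ↔ ¬ pref q x y)) (π v) x y hxy
        show _ ∈ 𝓔
        rw [hset]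
        by_contra hc
        exact h ((hC1 _).2 hc)
end

section
/- Let A be an assembly with a Guilbaud voting system 𝓔 and a profile assignment π : A → ZMod 6. If there exists p ∈ ZMod 6 such that both coalitions {v | π v ∈ {p, p+1, p+2}} and {v | π v ∈ {p+1, p+2, p+3}} are efficient, then the collective preference relation ≻ on the three candidates is a strict linear order (irreflexive, transitive, and total on distinct candidates). -/
instance inst_s1 (p : ZMod 6) (x y : Fin 3) : Decidable (pref p x y) := by
  unfold pref; infer_instance

/-- Each strict pairwise preference is held exactly on an arc of three consecutive profiles. -/
lemma pref_arc : ∀ (x y : Fin 3), x ≠ y → ∃ q : ZMod 6,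
    ∀ r : ZMod 6, pref r x y ↔ (r = q ∨ r = q + 1 ∨ r = q + 2) := by decide

lemma arc_compl : ∀ a b : ZMod 6,
    ¬(a = b ∨ a = b + 1 ∨ a = b + 2) ↔ (a = b + 3 ∨ a = b + 3 + 1 ∨ a = b + 3 + 2) := by decide

lemma six_cases : ∀ p q : ZMod 6,
    q = p ∨ q = p + 1 ∨ q = p + 2 ∨ q = p + 3 ∨ q = p + 4 ∨ q = p + 5 := by decide

lemma arc_mem1 : ∀ p q : ZMod 6,
    (q = p ∨ q = p + 1 ∨ q = p + 2) ↔ (p + 2 = q ∨ p + 2 = q + 1 ∨ p + 2 = q + 2) := by decide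

lemma arc_mem2 : ∀ p q : ZMod 6,
    (q = p + 5 ∨ q = p ∨ q = p + 1) ↔ (p + 1 = q ∨ p + 1 = q + 1 ∨ p + 1 = q + 2) := by decide

lemma pref_irrefl : ∀ (s : ZMod 6) (x : Fin 3), ¬ pref s x x := by decide

lemma pref_trans : ∀ (s : ZMod 6) (x y z : Fin 3),
    pref s x y → pref s y z → pref s x z := by decide

lemma pref_total : ∀ (s : ZMod 6) (x y : Fin 3), x ≠ y → pref s x y ∨ pref s y x := by decide

theorem conditionC_implies_linear {A : Type*} (𝓔 : Set (Set A))
    (hC1 : ∀ K : Set A, K ∈ 𝓔 ↔ Kᶜ ∉ 𝓔)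
    (hC2 : ∀ K L : Set A, K ∈ 𝓔 → K ⊆ L → L ∈ 𝓔)
    (π : A → ZMod 6)
    (hC : ∃ p : ZMod 6,
      {v : A | π v ∈ ({p, p + 1, p + 2} : Set (ZMod 6))} ∈ 𝓔 ∧
      {v : A | π v ∈ ({p + 1, p + 2, p + 3} : Set (ZMod 6))} ∈ 𝓔) :
    Irreflexive (collPref 𝓔 π) ∧ Transitive (collPref 𝓔 π) ∧
      ∀ x y : Fin 3, x ≠ y → collPref 𝓔 π x y ∨ collPref 𝓔 π y x := by
  classical
  obtain ⟨p, hK0, hK1⟩ := hC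
  -- arc coalitions
  set E' : ZMod 6 → Prop :=
    fun q => {v : A | π v = q ∨ π v = q + 1 ∨ π v = q + 2} ∈ 𝓔 with hE'def
  have hEp : E' p := by
    have : {v : A | π v ∈ ({p, p + 1, p + 2} : Set (ZMod 6))}
        = {v : A | π v = p ∨ π v = p + 1 ∨ π v = p + 2} := by
      ext v; simp [Set.mem_insert_iff]
    rwa [this] at hK0
  have hEp1 : E' (p + 1) := by
    have e1 : p + 1 + 1 = p + 2 := by ring
    have e2 : p + 1 + 2 = p + 3 := by ring
    have : {v : A | π v ∈ ({p + 1, p + 2, p + 3} : Set (ZMod 6))}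
        = {v : A | π v = p + 1 ∨ π v = p + 1 + 1 ∨ π v = p + 1 + 2} := by
      ext v; rw [e1, e2]; simp [Set.mem_insert_iff]
    rwa [this] at hK1
  have hcompl : ∀ q : ZMod 6, {v : A | π v = q ∨ π v = q + 1 ∨ π v = q + 2}ᶜ
      = {v : A | π v = q + 3 ∨ π v = q + 3 + 1 ∨ π v = q + 3 + 2} := by
    intro q; ext v
    simp only [Set.mem_compl_iff, Set.mem_setOf_eq]
    exact arc_compl (π v) q
  have hnot : ∀ q : ZMod 6, E' q ↔ ¬ E' (q + 3) := by
    intro q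
    rw [hE'def]
    simp only
    rw [hC1, hcompl q]
  have hn3 : ¬ E' (p + 3) := (hnot p).mp hEp
  have hn4 : ¬ E' (p + 4) := by
    have e : p + 1 + 3 = p + 4 := by ring
    have := (hnot (p + 1)).mp hEp1
    rwa [e] at this
  have hemp : (∅ : Set A) ∉ 𝓔 := by
    intro h
    have huniv : (Set.univ : Set A) ∈ 𝓔 := hC2 _ _ hEp (Set.subset_univ _)
    exact (hC1 ∅).mp h (by rwa [Set.compl_empty])
  -- the collective preference coincides with some profile's preference
  have key : ∃ s : ZMod 6, ∀ x y : Fin 3, collPref 𝓔 π x y ↔ pref s x y := by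
    have main : ∀ s : ZMod 6,
        (∀ q : ZMod 6, E' q ↔ (s = q ∨ s = q + 1 ∨ s = q + 2)) →
        ∀ x y : Fin 3, collPref 𝓔 π x y ↔ pref s x y := by
      intro s hs x y
      by_cases hxy : x = y
      · subst hxy
        constructor
        · intro h
          have : {v : A | pref (π v) x x} = (∅ : Set A) := by
            ext v; simp [pref_irrefl]
          rw [collPref, this] at h
          exact absurd h hemp
        · intro h; exact absurd h (pref_irrefl s x)
      · obtain ⟨q, hq⟩ := pref_arc x y hxy
        have hset : {v : A | pref (π v) x y}
            = {v : A | π v = q ∨ π v = q + 1 ∨ π v = q + 2} := by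
          ext v; exact hq (π v)
        rw [collPref, hset]
        rw [show ({v : A | π v = q ∨ π v = q + 1 ∨ π v = q + 2} ∈ 𝓔) = E' q from rfl]
        rw [hs q, hq s]
    by_cases h2 : E' (p + 2)
    · refine ⟨p + 2, main (p + 2) ?_⟩
      intro q
      have hn5 : ¬ E' (p + 5) := by
        have e : p + 2 + 3 = p + 5 := by ring
        have := (hnot (p + 2)).mp h2
        rwa [e] at this
      rw [← arc_mem1 p q]
      constructor
      · intro h
        rcases six_cases p q with h' | h' | h' | h' | h' | h' <;> subst h' <;> tauto
      · rintro (rfl | rfl | rfl) <;> assumption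
    · refine ⟨p + 1, main (p + 1) ?_⟩
      intro q
      have h5 : E' (p + 5) := by
        have e : p + 2 + 3 = p + 5 := by ring
        by_contra h
        exact h2 ((hnot (p + 2)).mpr (by rwa [e]))
      rw [← arc_mem2 p q]
      constructor
      · intro h
        rcases six_cases p q with h' | h' | h' | h' | h' | h' <;> subst h' <;> tauto
      · rintro (rfl | rfl | rfl) <;> assumption
  obtain ⟨s, hs⟩ := key
  refine ⟨?_, ?_, ?_⟩
  · intro x h
    exact pref_irrefl s x ((hs x x).mp h)
  · intro x y z hxy hyz
    exact (hs x z).mpr (pref_trans s x y z ((hs x y).mp hxy) ((hs y z).mp hyz))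
  · intro x y hxy
    rcases pref_total s x y hxy with h | h
    · exact Or.inl ((hs x y).mpr h)
    · exact Or.inr ((hs y x).mpr h)
end

section
/- Let A be an assembly with a Guilbaud voting system 𝓔 and a profile assignment π : A → ZMod 6. If p ∈ ZMod 6 is such that both coalitions {v | π v ∈ {p, p+1, p+2}} and {v | π v ∈ {p+1, p+2, p+3}} are efficient, then the collective preference relation ≻ coincides with one of the two rankings pref (p+1) or pref (p+2); that is, either (∀ x y, x ≻ y ↔ pref (p+1) x y) or (∀ x y, x ≻ y ↔ pref (p+2) x y). -/
lemma arc_lemma : ∀ x y : Fin 3, x ≠ y → ∃ s : ZMod 6,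
    ∀ q : ZMod 6, pref q x y ↔ (q = s ∨ q = s + 1 ∨ q = s + 2) := by decide

lemma compl_arith : ∀ a t : ZMod 6,
    ¬(a = t ∨ a = t + 1 ∨ a = t + 2) ↔ (a = t + 3 ∨ a = t + 3 + 1 ∨ a = t + 3 + 2) := by decide

lemma zmod6_cases : ∀ d : ZMod 6, d = 0 ∨ d = 1 ∨ d = 2 ∨ d = 3 ∨ d = 4 ∨ d = 5 := by decide

lemma rhs_iff : ∀ r d : ZMod 6,
    (r + 2 = r + d ∨ r + 2 = r + d + 1 ∨ r + 2 = r + d + 2) ↔ (d = 0 ∨ d = 1 ∨ d = 2) := by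
  decide

section Helper
variable {A : Type*} (𝓔 : Set (Set A)) (π : A → ZMod 6)

def arcK (s : ZMod 6) : Set A := {v | π v = s ∨ π v = s + 1 ∨ π v = s + 2}

lemma arcK_compl (t : ZMod 6) : (arcK π t)ᶜ = arcK π (t + 3) := by
  ext v
  simp only [arcK, Set.mem_compl_iff, Set.mem_setOf_eq]
  exact compl_arith (π v) t

lemma helper (hC1 : ∀ K : Set A, K ∈ 𝓔 ↔ Kᶜ ∉ 𝓔) (r : ZMod 6)
    (hr0 : arcK π r ∈ 𝓔) (hr1 : arcK π (r + 1) ∈ 𝓔) (hr2 : arcK π (r + 2) ∈ 𝓔) :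
    ∀ s : ZMod 6, (arcK π s ∈ 𝓔 ↔ (r + 2 = s ∨ r + 2 = s + 1 ∨ r + 2 = s + 2)) := by
  intro s
  have hs : s = r + (s - r) := by ring
  rcases zmod6_cases (s - r) with h | h | h | h | h | h <;> rw [h] at hs <;> subst hs <;>
    rw [rhs_iff]
  · rw [add_zero]; exact iff_of_true hr0 (by decide)
  · exact iff_of_true hr1 (by decide)
  · exact iff_of_true hr2 (by decide)
  · rw [← arcK_compl]
    exact iff_of_false ((hC1 _).mp hr0) (by decide)
  · rw [show (r : ZMod 6) + 4 = r + 1 + 3 by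
      rw [add_assoc, show (1 : ZMod 6) + 3 = 4 by decide], ← arcK_compl]
    exact iff_of_false ((hC1 _).mp hr1) (by decide)
  · rw [show (r : ZMod 6) + 5 = r + 2 + 3 by
      rw [add_assoc, show (2 : ZMod 6) + 3 = 5 by decide], ← arcK_compl]
    exact iff_of_false ((hC1 _).mp hr2) (by decide)

lemma main_from (hC1 : ∀ K : Set A, K ∈ 𝓔 ↔ Kᶜ ∉ 𝓔)
    (hC2 : ∀ K L : Set A, K ∈ 𝓔 → K ⊆ L → L ∈ 𝓔) (r : ZMod 6)
    (hr0 : arcK π r ∈ 𝓔) (hr1 : arcK π (r + 1) ∈ 𝓔) (hr2 : arcK π (r + 2) ∈ 𝓔) :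
    ∀ x y : Fin 3, collPref 𝓔 π x y ↔ pref (r + 2) x y := by
  intro x y
  by_cases hxy : x = y
  · subst hxy
    have hemp : (∅ : Set A) ∉ 𝓔 := by
      have huniv : (Set.univ : Set A) ∈ 𝓔 := hC2 _ _ hr0 (Set.subset_univ _)
      intro h
      exact ((hC1 ∅).mp h) (by simpa using huniv)
    constructor
    · intro h
      have : {v : A | pref (π v) x x} = (∅ : Set A) := by
        ext v; simp [pref]
      rw [collPref, this] at h
      exact absurd h hemp
    · intro h
      exact absurd h (by simp [pref])
  · obtain ⟨s, hs⟩ := arc_lemma x y hxy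
    have hset : {v : A | pref (π v) x y} = arcK π s := by
      ext v; exact hs (π v)
    rw [collPref, hset, helper 𝓔 π hC1 r hr0 hr1 hr2 s, hs (r + 2)]

end Helper

theorem conditionC_collective_is_p1_or_p2 {A : Type*} (𝓔 : Set (Set A))
    (hC1 : ∀ K : Set A, K ∈ 𝓔 ↔ Kᶜ ∉ 𝓔)
    (hC2 : ∀ K L : Set A, K ∈ 𝓔 → K ⊆ L → L ∈ 𝓔)
    (π : A → ZMod 6) (p : ZMod 6)
    (h1 : {v : A | π v ∈ ({p, p + 1, p + 2} : Set (ZMod 6))} ∈ 𝓔)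
    (h2 : {v : A | π v ∈ ({p + 1, p + 2, p + 3} : Set (ZMod 6))} ∈ 𝓔) :
    (∀ x y : Fin 3, collPref 𝓔 π x y ↔ pref (p + 1) x y) ∨
    (∀ x y : Fin 3, collPref 𝓔 π x y ↔ pref (p + 2) x y) := by
  have h1' : arcK π p ∈ 𝓔 := by
    have : {v : A | π v ∈ ({p, p + 1, p + 2} : Set (ZMod 6))} = arcK π p := by
      ext v; simp [arcK, Set.mem_insert_iff]
    rwa [this] at h1
  have h2' : arcK π (p + 1) ∈ 𝓔 := by
    have : {v : A | π v ∈ ({p + 1, p + 2, p + 3} : Set (ZMod 6))} = arcK π (p + 1) := by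
      ext v
      simp only [arcK, Set.mem_setOf_eq, Set.mem_insert_iff, Set.mem_singleton_iff,
        add_assoc, show (1 : ZMod 6) + 1 = 2 by decide, show (1 : ZMod 6) + 2 = 3 by decide]
    rwa [this] at h2
  by_cases hc : arcK π (p + 2) ∈ 𝓔
  · right
    exact main_from 𝓔 π hC1 hC2 p h1' h2' hc
  · left
    have h5 : arcK π (p + 5) ∈ 𝓔 := by
      have := hC1 (arcK π (p + 5))
      rw [arcK_compl, add_assoc, show (5 : ZMod 6) + 3 = 2 by decide] at this
      exact this.mpr hc
    have e0 : p + 5 + 1 = p := by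
      rw [add_assoc, show (5 : ZMod 6) + 1 = 0 by decide, add_zero]
    have e1 : p + 5 + 2 = p + 1 := by
      rw [add_assoc, show (5 : ZMod 6) + 2 = 1 by decide]
    have := main_from 𝓔 π hC1 hC2 (p + 5) h5 (by rwa [e0]) (by rwa [e1])
    rwa [e1] at this
end

section
/- Let A be an assembly with a Guilbaud voting system 𝓔 and a profile assignment π : A → ZMod 6. If the collective preference relation ≻ on the three candidates is a strict linear order (irreflexive, transitive, and total on distinct candidates), then there exists p ∈ ZMod 6 such that both coalitions {v | π v ∈ {p, p+1, p+2}} and {v | π v ∈ {p+1, p+2, p+3}} are efficient. -/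
instance prefDecidable (p : ZMod 6) (x y : Fin 3) : Decidable (pref p x y) :=
  inferInstanceAs (Decidable (rank p x < rank p y))

lemma eff_of {A : Type*} {𝓔 : Set (Set A)} (π : A → ZMod 6) {S : Set (ZMod 6)} {x y : Fin 3}
    (h : ∀ q : ZMod 6, q ∈ S ↔ pref q x y)
    (hx : collPref 𝓔 π x y) : {v : A | π v ∈ S} ∈ 𝓔 := by
  have e : {v : A | π v ∈ S} = {v : A | pref (π v) x y} := Set.ext fun v => h (π v)
  rw [e]; exact hx

theorem linear_implies_conditionC {A : Type*} (𝓔 : Set (Set A))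
    (hC1 : ∀ K : Set A, K ∈ 𝓔 ↔ Kᶜ ∉ 𝓔)
    (hC2 : ∀ K L : Set A, K ∈ 𝓔 → K ⊆ L → L ∈ 𝓔)
    (π : A → ZMod 6)
    (hirr : Irreflexive (collPref 𝓔 π))
    (htrans : Transitive (collPref 𝓔 π))
    (htotal : ∀ x y : Fin 3, x ≠ y → collPref 𝓔 π x y ∨ collPref 𝓔 π y x) :
    ∃ p : ZMod 6,
      {v : A | π v ∈ ({p, p + 1, p + 2} : Set (ZMod 6))} ∈ 𝓔 ∧
      {v : A | π v ∈ ({p + 1, p + 2, p + 3} : Set (ZMod 6))} ∈ 𝓔 := by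
  have mem : ∀ (a b c q : ZMod 6), q ∈ ({a, b, c} : Set (ZMod 6)) ↔ (q = a ∨ q = b ∨ q = c) := by
    intro a b c q
    simp [Set.mem_insert_iff, Set.mem_singleton_iff]
  rcases htotal 0 1 (by decide) with h01 | h10
  · rcases htotal 1 2 (by decide) with h12 | h21
    · -- a > b > c, p = 0
      have h02 := htrans h01 h12
      exact ⟨0, eff_of π (fun q => by rw [mem]; revert q; decide) h02,
                eff_of π (fun q => by rw [mem]; revert q; decide) h01⟩
    · rcases htotal 0 2 (by decide) with h02 | h20
      · -- a > c > b, p = 1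
        exact ⟨1, eff_of π (fun q => by rw [mem]; revert q; decide) h01,
                  eff_of π (fun q => by rw [mem]; revert q; decide) h21⟩
      · -- c > a > b, p = 2
        exact ⟨2, eff_of π (fun q => by rw [mem]; revert q; decide) h21,
                  eff_of π (fun q => by rw [mem]; revert q; decide) h20⟩
  · rcases htotal 1 2 (by decide) with h12 | h21
    · rcases htotal 0 2 (by decide) with h02 | h20
      · -- b > a > c, p = 5
        exact ⟨5, eff_of π (fun q => by rw [mem]; revert q; decide) h12,
                  eff_of π (fun q => by rw [mem]; revert q; decide) h02⟩
      · -- b > c > a, p = 4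
        exact ⟨4, eff_of π (fun q => by rw [mem]; revert q; decide) h10,
                  eff_of π (fun q => by rw [mem]; revert q; decide) h12⟩
    · -- c > b > a, p = 3
      have h20 := htrans h21 h10
      exact ⟨3, eff_of π (fun q => by rw [mem]; revert q; decide) h20,
                eff_of π (fun q => by rw [mem]; revert q; decide) h10⟩
end
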